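/- Suppose a finite planar point set S in general position is colored with c ≥ 2 colors such that the largest color class S_1 satisfies |S_1| = (1/(c-1))·∑_{a=2}^c |S_a| + γ for some real γ. Fix s ∈ S_1 and a triangulation of S_1 containing at least |S_1| - 2 triangles with s as a vertex. Then at most (|S| - |S_1|)/(c-1) of these triangles contain at least c-1 points of S in their interior, and hence at least γ - 2 of these monochromatic triangles contain at most c-2 points of S in their interior. -/

import Mathlib

open Classical in
theorem stmt18 (c : ℕ) (hc : 2 ≤ c) (S : Finset (ℝ × ℝ))
    (hgp : ∀ p q r : ℝ × ℝ, p ∈ S → q ∈ S → r ∈ S → p ≠ q → q ≠ r → p ≠ r →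
      ¬ Collinear ℝ ({p, q, r} : Set (ℝ × ℝ)))
    (Sa : Fin c → Finset (ℝ × ℝ))
    (hdisj : ∀ a b : Fin c, a ≠ b → Disjoint (Sa a) (Sa b))
    (hcover : ∀ x, x ∈ S ↔ ∃ a, x ∈ Sa a)
    (hmax : ∀ a : Fin c, (Sa a).card ≤ (Sa ⟨0, by omega⟩).card)
    (γ : ℝ)
    (hγ : ((Sa ⟨0, by omega⟩).card : ℝ) =
      (1 / ((c : ℝ) - 1)) *
        (∑ a ∈ Finset.univ \ {(⟨0, by omega⟩ : Fin c)}, ((Sa a).card : ℝ)) + γ)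
    (s : ℝ × ℝ) (hs : s ∈ Sa ⟨0, by omega⟩)
    (𝒯 : Finset (Finset (ℝ × ℝ)))
    (h𝒯 : ∀ t ∈ 𝒯, t.card = 3 ∧ s ∈ t ∧ t ⊆ Sa ⟨0, by omega⟩)
    (hTcard : ((Sa ⟨0, by omega⟩).card : ℝ) - 2 ≤ (𝒯.card : ℝ))
    (hdisjint : ∀ t ∈ 𝒯, ∀ t' ∈ 𝒯, t ≠ t' →
      interior (convexHull ℝ (t : Set (ℝ × ℝ))) ∩
        interior (convexHull ℝ (t' : Set (ℝ × ℝ))) = ∅)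
    (hnoc1 : ∀ t ∈ 𝒯, ∀ q ∈ Sa ⟨0, by omega⟩,
      q ∉ interior (convexHull ℝ (t : Set (ℝ × ℝ)))) :
    ((𝒯.filter fun t =>
          c - 1 ≤ (S.filter fun q =>
            q ∈ interior (convexHull ℝ (t : Set (ℝ × ℝ)))).card).card : ℝ)
        ≤ ((S.card : ℝ) - ((Sa ⟨0, by omega⟩).card : ℝ)) / ((c : ℝ) - 1) ∧
      γ - 2 ≤ ((𝒯.filter fun t =>
          (S.filter fun q =>
            q ∈ interior (convexHull ℝ (t : Set (ℝ × ℝ)))).card ≤ c - 2).card : ℝ) := by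
  have hc0 : 0 < c := by omega
  set S1 : Finset (ℝ × ℝ) := Sa ⟨0, by omega⟩ with hS1def
  set f : Finset (ℝ × ℝ) → Finset (ℝ × ℝ) :=
    fun t => S.filter fun q => q ∈ interior (convexHull ℝ (t : Set (ℝ × ℝ))) with hf
  have hS1S : S1 ⊆ S := fun x hx => (hcover x).2 ⟨_, hx⟩
  have hdisjf : ∀ t ∈ 𝒯, ∀ t' ∈ 𝒯, t ≠ t' → Disjoint (f t) (f t') := by
    intro t ht t' ht' hne
    rw [Finset.disjoint_left]
    intro q hq hq'
    have h1 := (Finset.mem_filter.1 hq).2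
    have h2 := (Finset.mem_filter.1 hq').2
    have h3 := hdisjint t ht t' ht' hne
    have : q ∈ interior (convexHull ℝ (t : Set (ℝ × ℝ))) ∩
        interior (convexHull ℝ (t' : Set (ℝ × ℝ))) := ⟨h1, h2⟩
    rw [h3] at this
    exact this
  have hsub : 𝒯.biUnion f ⊆ S \ S1 := by
    intro q hq
    obtain ⟨t, ht, hqt⟩ := Finset.mem_biUnion.1 hq
    exact Finset.mem_sdiff.2 ⟨(Finset.mem_filter.1 hqt).1,
      fun hq1 => hnoc1 t ht q hq1 (Finset.mem_filter.1 hqt).2⟩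
  have hcardle : S1.card ≤ S.card := Finset.card_le_card hS1S
  have hsum : ∑ t ∈ 𝒯, (f t).card ≤ S.card - S1.card := by
    rw [← Finset.card_biUnion hdisjf]
    calc (𝒯.biUnion f).card ≤ (S \ S1).card := Finset.card_le_card hsub
      _ = S.card - S1.card := Finset.card_sdiff_of_subset hS1S
  set B : Finset (Finset (ℝ × ℝ)) := 𝒯.filter (fun t => c - 1 ≤ (f t).card) with hB
  have hBsum : B.card * (c - 1) ≤ ∑ t ∈ 𝒯, (f t).card := by
    calc B.card * (c - 1) = B.card • (c - 1) := rfl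
      _ ≤ ∑ t ∈ B, (f t).card :=
          Finset.card_nsmul_le_sum B _ _ (fun t ht => (Finset.mem_filter.1 ht).2)
      _ ≤ ∑ t ∈ 𝒯, (f t).card :=
          Finset.sum_le_sum_of_subset (Finset.filter_subset _ _)
  have hnat : B.card * (c - 1) ≤ S.card - S1.card := hBsum.trans hsum
  have hcr : (0:ℝ) < (c:ℝ) - 1 := by
    have : (2:ℝ) ≤ (c:ℝ) := by exact_mod_cast hc
    linarith
  have key1 : (B.card : ℝ) ≤ ((S.card : ℝ) - (S1.card : ℝ)) / ((c:ℝ) - 1) := by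
    rw [le_div_iff₀ hcr]
    have : ((B.card * (c - 1) : ℕ) : ℝ) ≤ ((S.card - S1.card : ℕ) : ℝ) :=
      Nat.cast_le.2 hnat
    rw [Nat.cast_mul, Nat.cast_sub (by omega : 1 ≤ c), Nat.cast_sub hcardle] at this
    simpa using this
  -- sum over colors
  have hScard : (S.card : ℝ) = ∑ a, ((Sa a).card : ℝ) := by
    have hSeq : S = Finset.univ.biUnion Sa := by
      ext x
      simp [hcover x]
    rw [hSeq, Finset.card_biUnion (fun a _ b _ h => hdisj a b h)]
    push_cast
    rfl
  have hsum0 : ∑ a ∈ Finset.univ \ {(⟨0, by omega⟩ : Fin c)}, ((Sa a).card : ℝ)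
      = (S.card : ℝ) - (S1.card : ℝ) := by
    have h := Finset.sum_sdiff (f := fun a => ((Sa a).card : ℝ))
      (Finset.subset_univ ({(⟨0, hc0⟩ : Fin c)} : Finset (Fin c)))
    rw [Finset.sum_singleton] at h
    rw [hScard]
    have : S1.card = (Sa ⟨0, hc0⟩).card := rfl
    rw [this]
    linarith [h]
  -- second part
  have hGB : 𝒯.filter (fun t => (f t).card ≤ c - 2)
      = 𝒯.filter (fun t => ¬ (c - 1 ≤ (f t).card)) := by
    apply Finset.filter_congr
    intro t _
    constructor <;> intro h <;> omega
  have hGcard : (𝒯.filter (fun t => (f t).card ≤ c - 2)).card = 𝒯.card - B.card := by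
    rw [hGB, Finset.filter_not, Finset.card_sdiff_of_subset (Finset.filter_subset _ _)]
  have hBle : B.card ≤ 𝒯.card := Finset.card_filter_le _ _
  have key2 : γ - 2 ≤ ((𝒯.filter (fun t => (f t).card ≤ c - 2)).card : ℝ) := by
    have hGR : ((𝒯.filter (fun t => (f t).card ≤ c - 2)).card : ℝ)
        = (𝒯.card : ℝ) - (B.card : ℝ) := by
      rw [hGcard, Nat.cast_sub hBle]
    rw [hGR]
    have hγ'' := hγ
    rw [hsum0, one_div_mul_eq_div] at hγ''
    linarith [hTcard, key1]
  constructor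
  · simp only [Finset.pure_def, Finset.bind_def, Finset.sup_singleton_apply, Finset.filter_image]
    convert key1 using 3
    convert Finset.card_image_of_injective _ Finset.coe_injective
  · simp only [Finset.pure_def, Finset.bind_def, Finset.sup_singleton_apply, Finset.filter_image]
    convert key2 using 3
    convert Finset.card_image_of_injective _ Finset.coe_injective
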